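/- Let P be a digital net in prime power base b with generating matrices C_1,…,C_s. For any u ⊆ {1,…,s} and k ∈ ℕ₀^{|u|}, the image of the restriction of the projection proj_{u,k+1_u} (extracting the (k_j+1)-st digit of each coordinate j∈u) to V(u,k+1_u) ∩ P^⊥ is a subspace of F_b^{|u|} of dimension |u| − rank(C_{u,k+1_u}) + rank(C_{u,k}). -/

import Mathlib

open Finset

noncomputable section

/-- the `i`-th `b`-adic digit of a natural number `k`. -/
def ndigit (b k i : ℕ) : ℕ := k / b ^ i % b

/-- the `(i+1)`-st `b`-adic digit of a real number `x ∈ [0,1)`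
(the unique expansion with infinitely many digits `≠ b-1`). -/
def rdigit (b : ℕ) (x : ℝ) (i : ℕ) : ℕ := (⌊(b : ℝ) ^ (i + 1) * x⌋).toNat % b

/-- the primitive `b`-th root of unity `ω_b = exp(2πi/b)`. -/
def omg (b : ℕ) : ℂ := Complex.exp (2 * Real.pi * Complex.I / b)

/-- embed a digit (element of `Z_b`) into the finite field `F` via the bijection `φ`. -/
def toF {F : Type} [Field F] [Fintype F] (φ : Fin (Fintype.card F) ≃ F) (a : ℕ) : F :=
  φ ⟨a % Fintype.card F, Nat.mod_lt a Fintype.card_pos⟩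

/-- map a field element back to a digit in `Z_b` via `φ⁻¹`. -/
def fromF {F : Type} [Field F] [Fintype F] (φ : Fin (Fintype.card F) ≃ F) (a : F) : ℕ :=
  (φ.symm a : ℕ)

/-- the `k`-th `b`-adic Walsh function, `b = |F|`,
`wal_k(x) = ω_b^{φ⁻¹(φ(κ₀)φ(ξ₁)) + φ⁻¹(φ(κ₁)φ(ξ₂)) + ⋯}`. -/
def wal {F : Type} [Field F] [Fintype F] (φ : Fin (Fintype.card F) ≃ F) (k : ℕ) (x : ℝ) : ℂ :=
  omg (Fintype.card F) ^
    ∑ i ∈ Finset.range k,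
      fromF φ (toF φ (ndigit (Fintype.card F) k i) * toF φ (rdigit (Fintype.card F) x i))

/-- the multivariate `b`-adic Walsh function `wal_k(x) = ∏_j wal_{k_j}(x_j)`. -/
def walv {F : Type} [Field F] [Fintype F] {s : ℕ} (φ : Fin (Fintype.card F) ≃ F)
    (k : Fin s → ℕ) (x : Fin s → ℝ) : ℂ :=
  ∏ j, wal φ (k j) (x j)

/-- the `j`-th coordinate of the `h`-th point of the digital net with generating
matrices `C_1,…,C_s` (with `n` rows, `m` columns, rows of index `≥ n` unused). -/
def dnet {F : Type} [Field F] [Fintype F] {s m : ℕ} (φ : Fin (Fintype.card F) ≃ F)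
    (C : Fin s → ℕ → Fin m → F) (n : ℕ) (h : ℕ) (j : Fin s) : ℝ :=
  ∑ i ∈ Finset.range n,
    (fromF φ (∑ c, C j i c * toF φ (ndigit (Fintype.card F) h (c : ℕ))) : ℝ) /
      (Fintype.card F : ℝ) ^ (i + 1)

/-- membership in the dual net `P^⊥`:
`C_1^⊤ ν_n(k_1) + ⋯ + C_s^⊤ ν_n(k_s) = 0 ∈ F^m`. -/
def inDual {F : Type} [Field F] [Fintype F] {s m : ℕ} (φ : Fin (Fintype.card F) ≃ F)
    (C : Fin s → ℕ → Fin m → F) (n : ℕ) (k : Fin s → ℕ) : Prop :=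
  ∀ c : Fin m,
    ∑ j, ∑ i ∈ Finset.range n, C j i c * toF φ (ndigit (Fintype.card F) (k j) i) = 0

/-- `V(u,k) = {ℓ ∈ ℕ₀^s : ℓ_j < b^{k_j} if j ∈ u, ℓ_j = 0 otherwise}`. -/
def Vset (b : ℕ) {s : ℕ} (u : Finset (Fin s)) (k : Fin s → ℕ) : Finset (Fin s → ℕ) :=
  Fintype.piFinset fun j => Finset.range (if j ∈ u then b ^ k j else 1)

/-- `A(u,l) = {ℓ ∈ ℕ₀^s : b^{l_j-1} ≤ ℓ_j < b^{l_j} if j ∈ u, ℓ_j = 0 otherwise}`. -/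
def Aset (b : ℕ) {s : ℕ} (u : Finset (Fin s)) (l : Fin s → ℕ) : Finset (Fin s → ℕ) :=
  (Vset b u l).filter fun ℓ => ∀ j ∈ u, b ^ (l j - 1) ≤ ℓ j

/-- `k + 1_v`: add one to the components in `v`. -/
def plusOne {s : ℕ} (k : Fin s → ℕ) (v : Finset (Fin s)) : Fin s → ℕ :=
  fun j => if j ∈ v then k j + 1 else k j

/-- the gain coefficient `Γ_{u,k}` of an `N`-element point set in base `b`. -/
def gain {s : ℕ} (b N : ℕ) (x : Fin N → Fin s → ℝ) (u : Finset (Fin s))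
    (k : Fin s → ℕ) : ℝ :=
  (1 / N) * ∑ i, ∑ i', ∏ j ∈ u,
    ((b * (if ⌊(b : ℝ) ^ (k j + 1) * x i j⌋ = ⌊(b : ℝ) ^ (k j + 1) * x i' j⌋ then (1:ℝ) else 0) -
        (if ⌊(b : ℝ) ^ (k j) * x i j⌋ = ⌊(b : ℝ) ^ (k j) * x i' j⌋ then (1:ℝ) else 0)) /
      (b - 1))

/-- `C_{u,k}`: the matrix stacking the first `k_j` rows of `C_j` for `j ∈ u`
(a generating matrix `C_j` having `n` rows). -/
def Cuk {F : Type} [Field F] [Fintype F] {s m : ℕ} (C : Fin s → ℕ → Fin m → F) (n : ℕ)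
    (u : Finset (Fin s)) (k : Fin s → ℕ) :
    Matrix ((j : Fin s) × Fin (min (if j ∈ u then k j else 0) n)) (Fin m) F :=
  fun p c => C p.1 (p.2 : ℕ) c

/-- `C` generates a digital `(t,m,s)`-net in base `b = |F|`:
`C_{u,k}` has full row rank whenever `|k| ≤ m - t`. -/
def IsDigitalTNet {F : Type} [Field F] [Fintype F] {s m : ℕ}
    (C : Fin s → ℕ → Fin m → F) (n : ℕ) (t : ℕ) : Prop :=
  ∀ u : Finset (Fin s), ∀ k : Fin s → ℕ,
    (∑ j ∈ u, k j) + t ≤ m → (Cuk C n u k).rank = ∑ j ∈ u, k j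

/-- the upper bound `B(u,k) = b^{m - rank(C_{u,k})} (b-1)^{rank(C_{u,k}) - rank(C_{u,k+1_u})}`. -/
def Bcoef {F : Type} [Field F] [Fintype F] {s m : ℕ} (C : Fin s → ℕ → Fin m → F) (n : ℕ)
    (u : Finset (Fin s)) (k : Fin s → ℕ) : ℝ :=
  (Fintype.card F : ℝ) ^ ((m : ℤ) - ((Cuk C n u k).rank : ℤ)) *
    ((Fintype.card F : ℝ) - 1) ^
      (((Cuk C n u k).rank : ℤ) - ((Cuk C n u (plusOne k u)).rank : ℤ))

/-- `t*_u = m + 1 - min{|k| : k ∈ ℕ^{|u|}, C_{u,k} not full row rank}`. -/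
def tstar {F : Type} [Field F] [Fintype F] {s m : ℕ} (C : Fin s → ℕ → Fin m → F) (n : ℕ)
    (u : Finset (Fin s)) : ℤ :=
  (m : ℤ) + 1 -
    (sInf {r : ℕ | ∃ k : Fin s → ℕ, (∀ j ∈ u, 1 ≤ k j) ∧
      (Cuk C n u k).rank ≠ ∑ j ∈ u, k j ∧ r = ∑ j ∈ u, k j} : ℕ)

end

section Aux8

open Finset Submodule Matrix

variable {F : Type} [Field F] [Fintype F] {s m : ℕ}

lemma toF_zero' (φ : Fin (Fintype.card F) ≃ F) (hφ : φ ⟨0, Fintype.card_pos⟩ = 0) :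
    toF φ 0 = 0 := by
  unfold toF
  convert hφ using 2
  exact Fin.ext (Nat.zero_mod _)

lemma fromF_lt (φ : Fin (Fintype.card F) ≃ F) (a : F) : fromF φ a < Fintype.card F :=
  (φ.symm a).2

lemma toF_fromF (φ : Fin (Fintype.card F) ≃ F) (a : F) : toF φ (fromF φ a) = a := by
  unfold toF fromF
  have h : (⟨(φ.symm a : ℕ) % Fintype.card F, Nat.mod_lt _ Fintype.card_pos⟩ :
      Fin (Fintype.card F)) = φ.symm a :=
    Fin.ext (Nat.mod_eq_of_lt (φ.symm a).2)
  rw [h, Equiv.apply_symm_apply]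

lemma ndigit_of_lt {b l : ℕ} (i : ℕ) (h : l < b ^ i) : ndigit b l i = 0 := by
  unfold ndigit
  rw [Nat.div_eq_of_lt h, Nat.zero_mod]

lemma sum_digits_lt {b : ℕ} (hb : 0 < b) (d : ℕ → ℕ) (hd : ∀ i, d i < b) (L : ℕ) :
    ∑ i ∈ range L, d i * b ^ i < b ^ L := by
  induction L with
  | zero => simpa using hb
  | succ L ih =>
    rw [Finset.sum_range_succ, pow_succ]
    obtain ⟨b', rfl⟩ : ∃ b', b = b' + 1 := ⟨b - 1, by omega⟩
    have h1 : d L * (b' + 1) ^ L ≤ b' * (b' + 1) ^ L :=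
      Nat.mul_le_mul_right _ (by have := hd L; omega)
    have h2 : (b' + 1) ^ L * (b' + 1) = (b' + 1) ^ L + b' * (b' + 1) ^ L := by ring
    omega

lemma ndigit_sum {b : ℕ} (hb : 1 < b) (d : ℕ → ℕ) (hd : ∀ i, d i < b) (L i : ℕ)
    (hi : i < L) : ndigit b (∑ i' ∈ range L, d i' * b ^ i') i = d i := by
  set S : ℕ := ∑ j ∈ range (L - (i + 1)), d (i + 1 + j) * b ^ j with hS
  have hsplit : ∑ i' ∈ range L, d i' * b ^ i'
      = (∑ i' ∈ range i, d i' * b ^ i') + b ^ i * (d i + b * S) := by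
    rw [← Finset.sum_range_add_sum_Ico _ (by omega : i + 1 ≤ L), Finset.sum_range_succ,
      Finset.sum_Ico_eq_sum_range]
    have h1 : ∀ j, d (i + 1 + j) * b ^ (i + 1 + j) = b ^ (i + 1) * (d (i + 1 + j) * b ^ j) := by
      intro j; rw [pow_add]; ring
    rw [Finset.sum_congr rfl (fun j _ => h1 j), ← Finset.mul_sum, ← hS]
    ring
  have hA : ∑ i' ∈ range i, d i' * b ^ i' < b ^ i := sum_digits_lt (by omega) d hd i
  unfold ndigit
  rw [hsplit, Nat.add_mul_div_left _ _ (pow_pos (by omega : 0 < b) i),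
    Nat.div_eq_of_lt hA, Nat.zero_add, Nat.add_mul_mod_self_left,
    Nat.mod_eq_of_lt (hd i)]

lemma sum_trunc {α : Type*} [AddCommMonoid α] (f : ℕ → α) (L n : ℕ)
    (hf : ∀ i, L ≤ i → f i = 0) :
    ∑ i ∈ range L, (if i < n then f i else 0) = ∑ i ∈ range n, f i := by
  have h1 : ∀ Mx, n ≤ Mx →
      ∑ i ∈ range Mx, (if i < n then f i else 0) = ∑ i ∈ range n, f i := by
    intro Mx hMx
    rw [← Finset.sum_filter]
    apply Finset.sum_congr _ (fun _ _ => rfl)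
    ext i
    simp only [Finset.mem_filter, Finset.mem_range]
    omega
  rcases le_or_gt n L with h | h
  · exact h1 L h
  · have h2 := Finset.sum_range_add_sum_Ico (fun i => if i < n then f i else 0) h.le
    have h3 : ∑ i ∈ Finset.Ico L n, (if i < n then f i else 0) = 0 :=
      Finset.sum_eq_zero fun i hi => by
        rcases Finset.mem_Ico.mp hi with ⟨ha, _⟩
        simp [hf i ha]
    rw [h3, add_zero] at h2
    rw [h2, h1 n le_rfl]

/-- the matrix with rows indexed by `(j ∈ u, i < k j)`, row `(j,i)` being
row `i` of `C j` if `i < n` and zero otherwise. -/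
def Mmat (C : Fin s → ℕ → Fin m → F) (n : ℕ) (u : Finset (Fin s)) (k : Fin s → ℕ) :
    Matrix ((j : {j : Fin s // j ∈ u}) × Fin (k j.1)) (Fin m) F :=
  fun p c => if (p.2 : ℕ) < n then C p.1.1 p.2 c else 0

lemma rank_Mmat (C : Fin s → ℕ → Fin m → F) (n : ℕ) (u : Finset (Fin s)) (k : Fin s → ℕ) :
    (Mmat C n u k).rank = (Cuk C n u k).rank := by
  have hspan : span F (Set.range (Mmat C n u k)) = span F (Set.range (Cuk C n u k)) := by
    apply le_antisymm
    · rw [Submodule.span_le]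
      rintro _ ⟨⟨j, i⟩, rfl⟩
      by_cases hin : (i : ℕ) < n
      · apply Submodule.subset_span
        refine ⟨⟨j.1, ⟨(i : ℕ), ?_⟩⟩, ?_⟩
        · simp only [j.2, if_true]
          exact lt_min i.2 hin
        · funext c
          simp [Mmat, Cuk, hin]
      · have h0 : Mmat C n u k ⟨j, i⟩ = 0 := by
          funext c; simp [Mmat, hin]
        rw [h0]
        exact Submodule.zero_mem _
    · rw [Submodule.span_le]
      rintro _ ⟨⟨j, i⟩, rfl⟩
      obtain ⟨iv, hiv⟩ := i
      have hj : j ∈ u := by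
        by_contra hj
        rw [if_neg hj] at hiv
        omega
      rw [if_pos hj] at hiv
      apply Submodule.subset_span
      refine ⟨⟨⟨j, hj⟩, ⟨iv, lt_of_lt_of_le hiv (min_le_left _ _)⟩⟩, ?_⟩
      funext c
      simp [Mmat, Cuk, lt_of_lt_of_le hiv (min_le_right _ _)]
  rw [Matrix.rank_eq_finrank_span_row, Matrix.rank_eq_finrank_span_row]
  exact congrArg (fun S : Submodule F (Fin m → F) => Module.finrank F S) hspan

lemma finrank_range_vecMulLinear {ι : Type} [Fintype ι] (M : Matrix ι (Fin m) F) :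
    Module.finrank F (LinearMap.range M.vecMulLinear) = M.rank := by
  have h : M.vecMulLinear = (Matrix.transpose M).mulVecLin :=
    LinearMap.ext fun x => by
      rw [Matrix.vecMulLinear_apply, Matrix.mulVecLin_apply, Matrix.mulVec_transpose]
  rw [h, show Module.finrank F (LinearMap.range (Matrix.transpose M).mulVecLin)
      = (Matrix.transpose M).rank from rfl, Matrix.rank_transpose]

lemma vecMulLinear_apply_eq {ι : Type} [Fintype ι] (M : Matrix ι (Fin m) F) (x : ι → F)
    (c : Fin m) : M.vecMulLinear x c = ∑ p, x p * M p c := by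
  rw [Matrix.vecMulLinear_apply]
  rfl

/-- the key computation: for `ℓ` supported on `u` with `ℓ j < b ^ k' j`, and `x` the
vector of digits of `ℓ`, membership of `ℓ` in the dual net is equivalent to
`x ᵥ* Mmat C n u k' = 0`. -/
lemma inDual_iff_vecMul (φ : Fin (Fintype.card F) ≃ F) (hφ : φ ⟨0, Fintype.card_pos⟩ = 0)
    (C : Fin s → ℕ → Fin m → F) (n : ℕ) (u : Finset (Fin s)) (k' : Fin s → ℕ)
    (ℓ : Fin s → ℕ) (hV0 : ∀ j ∉ u, ℓ j = 0)
    (hVlt : ∀ j ∈ u, ℓ j < Fintype.card F ^ k' j)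
    (x : (j : {j : Fin s // j ∈ u}) × Fin (k' j.1) → F)
    (hx : ∀ p : (j : {j : Fin s // j ∈ u}) × Fin (k' j.1),
      x p = toF φ (ndigit (Fintype.card F) (ℓ p.1.1) (p.2 : ℕ))) :
    inDual φ C n ℓ ↔ (Mmat C n u k').vecMulLinear x = 0 := by
  have key : ∀ c : Fin m, (Mmat C n u k').vecMulLinear x c
      = ∑ j, ∑ i ∈ Finset.range n, C j i c * toF φ (ndigit (Fintype.card F) (ℓ j) i) := by
    intro c
    rw [vecMulLinear_apply_eq]
    rw [show (Finset.univ : Finset ((j : {j : Fin s // j ∈ u}) × Fin (k' j.1)))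
        = Finset.univ.sigma (fun _ => Finset.univ) from (Finset.univ_sigma_univ).symm,
      Finset.sum_sigma]
    have inner : ∀ j : {j : Fin s // j ∈ u},
        ∑ i : Fin (k' j.1), x ⟨j, i⟩ * Mmat C n u k' ⟨j, i⟩ c
          = ∑ i ∈ Finset.range n, C j.1 i c * toF φ (ndigit (Fintype.card F) (ℓ j.1) i) := by
      intro j
      have step1 : ∀ i : Fin (k' j.1), x ⟨j, i⟩ * Mmat C n u k' ⟨j, i⟩ c
          = (fun i0 : ℕ => if i0 < n then
              C j.1 i0 c * toF φ (ndigit (Fintype.card F) (ℓ j.1) i0) else 0) (i : ℕ) := by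
        intro i
        rw [hx ⟨j, i⟩]
        simp only [Mmat]
        by_cases hin : (i : ℕ) < n
        · simp only [hin, if_true]
          ring
        · simp [hin]
      have hvanish : ∀ i, k' j.1 ≤ i →
          C j.1 i c * toF φ (ndigit (Fintype.card F) (ℓ j.1) i) = 0 := by
        intro i hi
        have hdz : ndigit (Fintype.card F) (ℓ j.1) i = 0 := by
          apply ndigit_of_lt
          exact lt_of_lt_of_le (hVlt j.1 j.2)
            (Nat.pow_le_pow_right Fintype.card_pos hi)
        rw [hdz, toF_zero' φ hφ, mul_zero]
      calc ∑ i : Fin (k' j.1), x ⟨j, i⟩ * Mmat C n u k' ⟨j, i⟩ c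
          = ∑ i : Fin (k' j.1), (fun i0 : ℕ => if i0 < n then
              C j.1 i0 c * toF φ (ndigit (Fintype.card F) (ℓ j.1) i0) else 0) (i : ℕ) :=
            Finset.sum_congr rfl (fun i _ => step1 i)
        _ = ∑ i ∈ Finset.range (k' j.1), (fun i0 : ℕ => if i0 < n then
              C j.1 i0 c * toF φ (ndigit (Fintype.card F) (ℓ j.1) i0) else 0) i :=
            Fin.sum_univ_eq_sum_range (fun i0 : ℕ => if i0 < n then
              C j.1 i0 c * toF φ (ndigit (Fintype.card F) (ℓ j.1) i0) else 0) (k' j.1)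
        _ = ∑ i ∈ Finset.range n, C j.1 i c * toF φ (ndigit (Fintype.card F) (ℓ j.1) i) :=
            sum_trunc _ _ _ hvanish
    rw [Finset.sum_congr rfl (fun j _ => inner j)]
    calc ∑ j : {j : Fin s // j ∈ u},
          ∑ i ∈ Finset.range n, C j.1 i c * toF φ (ndigit (Fintype.card F) (ℓ j.1) i)
        = ∑ j ∈ u, ∑ i ∈ Finset.range n, C j i c * toF φ (ndigit (Fintype.card F) (ℓ j) i) :=
          Finset.sum_coe_sort u (fun j0 => ∑ i ∈ Finset.range n,
            C j0 i c * toF φ (ndigit (Fintype.card F) (ℓ j0) i))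
      _ = ∑ j : Fin s, ∑ i ∈ Finset.range n,
            C j i c * toF φ (ndigit (Fintype.card F) (ℓ j) i) := by
          apply Finset.sum_subset (Finset.subset_univ u)
          intro j _ hj
          apply Finset.sum_eq_zero
          intro i _
          rw [hV0 j hj]
          have h0 : ndigit (Fintype.card F) 0 i = 0 := by simp [ndigit]
          rw [h0, toF_zero' φ hφ, mul_zero]
  constructor
  · intro h
    funext c
    rw [key c, h c, Pi.zero_apply]
  · intro h c
    rw [← key c, h, Pi.zero_apply]

/-- extension by zero from digit vectors of length `k` to length `k'`. -/
def emap (u : Finset (Fin s)) (k k' : Fin s → ℕ) :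
    (((j : {j : Fin s // j ∈ u}) × Fin (k j.1)) → F) →ₗ[F]
      (((j : {j : Fin s // j ∈ u}) × Fin (k' j.1)) → F) where
  toFun x p := if h : (p.2 : ℕ) < k p.1.1 then x ⟨p.1, ⟨(p.2 : ℕ), h⟩⟩ else 0
  map_add' x y := by
    funext p
    by_cases h : (p.2 : ℕ) < k p.1.1 <;> simp [h]
  map_smul' a x := by
    funext p
    by_cases h : (p.2 : ℕ) < k p.1.1 <;> simp [h]

lemma emap_apply (u : Finset (Fin s)) (k k' : Fin s → ℕ)
    (x : ((j : {j : Fin s // j ∈ u}) × Fin (k j.1)) → F)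
    (p : (j : {j : Fin s // j ∈ u}) × Fin (k' j.1)) :
    emap u k k' x p = if h : (p.2 : ℕ) < k p.1.1 then x ⟨p.1, ⟨(p.2 : ℕ), h⟩⟩ else 0 := rfl

/-- projection extracting the `(k j + 1)`-st digit of each coordinate. -/
def pimap (u : Finset (Fin s)) (k k' : Fin s → ℕ)
    (hlt : ∀ j : {j : Fin s // j ∈ u}, k j.1 < k' j.1) :
    (((j : {j : Fin s // j ∈ u}) × Fin (k' j.1)) → F) →ₗ[F] ({j : Fin s // j ∈ u} → F) :=
  LinearMap.pi fun j => LinearMap.proj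
    (⟨j, ⟨k j.1, hlt j⟩⟩ : (j : {j : Fin s // j ∈ u}) × Fin (k' j.1))

lemma pimap_apply (u : Finset (Fin s)) (k k' : Fin s → ℕ)
    (hlt : ∀ j : {j : Fin s // j ∈ u}, k j.1 < k' j.1)
    (x : ((j : {j : Fin s // j ∈ u}) × Fin (k' j.1)) → F) (j : {j : Fin s // j ∈ u}) :
    pimap u k k' hlt x j = x ⟨j, ⟨k j.1, hlt j⟩⟩ := rfl

set_option maxHeartbeats 1000000 in
set_option synthInstance.maxHeartbeats 1000000 in
lemma finrank_key (C : Fin s → ℕ → Fin m → F) (n : ℕ) (u : Finset (Fin s))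
    (k k' : Fin s → ℕ) (hlt : ∀ j : {j : Fin s // j ∈ u}, k j.1 < k' j.1)
    (hkk' : ∀ j : {j : Fin s // j ∈ u}, k' j.1 = k j.1 + 1) :
    Module.finrank F
        ((LinearMap.ker (Mmat C n u k').vecMulLinear).map (pimap u k k' hlt))
      + (Cuk C n u k').rank = u.card + (Cuk C n u k).rank := by
  have hTe : ∀ x₀, (Mmat C n u k').vecMulLinear (emap u k k' x₀)
      = (Mmat C n u k).vecMulLinear x₀ := by
    intro x₀
    funext c
    rw [vecMulLinear_apply_eq, vecMulLinear_apply_eq]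
    rw [show (Finset.univ : Finset ((j : {j : Fin s // j ∈ u}) × Fin (k' j.1)))
        = Finset.univ.sigma (fun _ => Finset.univ) from Finset.univ_sigma_univ.symm,
      Finset.sum_sigma]
    rw [show (Finset.univ : Finset ((j : {j : Fin s // j ∈ u}) × Fin (k j.1)))
        = Finset.univ.sigma (fun _ => Finset.univ) from Finset.univ_sigma_univ.symm,
      Finset.sum_sigma]
    apply Finset.sum_congr rfl
    intro j _
    have hL : ∀ i : Fin (k' j.1), emap u k k' x₀ ⟨j, i⟩ * Mmat C n u k' ⟨j, i⟩ c
        = (fun i0 : ℕ => (if h : i0 < k j.1 then x₀ ⟨j, ⟨i0, h⟩⟩ else 0) *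
            (if i0 < n then C j.1 i0 c else 0)) (i : ℕ) := fun i => rfl
    have hR : ∀ i : Fin (k j.1), x₀ ⟨j, i⟩ * Mmat C n u k ⟨j, i⟩ c
        = (fun i0 : ℕ => (if h : i0 < k j.1 then x₀ ⟨j, ⟨i0, h⟩⟩ else 0) *
            (if i0 < n then C j.1 i0 c else 0)) (i : ℕ) := by
      intro i
      obtain ⟨iv, hiv⟩ := i
      simp [Mmat, hiv]
    calc ∑ i : Fin (k' j.1), emap u k k' x₀ ⟨j, i⟩ * Mmat C n u k' ⟨j, i⟩ c
        = ∑ i : Fin (k' j.1), (fun i0 : ℕ => (if h : i0 < k j.1 then x₀ ⟨j, ⟨i0, h⟩⟩ else 0) *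
            (if i0 < n then C j.1 i0 c else 0)) (i : ℕ) :=
          Finset.sum_congr rfl (fun i _ => hL i)
      _ = ∑ i ∈ Finset.range (k' j.1), (fun i0 : ℕ =>
            (if h : i0 < k j.1 then x₀ ⟨j, ⟨i0, h⟩⟩ else 0) *
            (if i0 < n then C j.1 i0 c else 0)) i :=
          Fin.sum_univ_eq_sum_range (fun i0 : ℕ =>
            (if h : i0 < k j.1 then x₀ ⟨j, ⟨i0, h⟩⟩ else 0) *
            (if i0 < n then C j.1 i0 c else 0)) (k' j.1)
      _ = ∑ i ∈ Finset.range (k j.1), (fun i0 : ℕ =>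
            (if h : i0 < k j.1 then x₀ ⟨j, ⟨i0, h⟩⟩ else 0) *
            (if i0 < n then C j.1 i0 c else 0)) i := by
          rw [hkk' j, Finset.sum_range_succ]
          simp
      _ = ∑ i : Fin (k j.1), (fun i0 : ℕ => (if h : i0 < k j.1 then x₀ ⟨j, ⟨i0, h⟩⟩ else 0) *
            (if i0 < n then C j.1 i0 c else 0)) (i : ℕ) :=
          (Fin.sum_univ_eq_sum_range (fun i0 : ℕ =>
            (if h : i0 < k j.1 then x₀ ⟨j, ⟨i0, h⟩⟩ else 0) *
            (if i0 < n then C j.1 i0 c else 0)) (k j.1)).symm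
      _ = ∑ i : Fin (k j.1), x₀ ⟨j, i⟩ * Mmat C n u k ⟨j, i⟩ c :=
          Finset.sum_congr rfl (fun i _ => (hR i).symm)
  have he_inj : Function.Injective (emap (F := F) u k k') := by
    intro x y hxy
    funext p
    obtain ⟨j, iv, hiv⟩ := p
    have h2 := congrFun hxy ⟨j, ⟨iv, lt_trans hiv (hlt j)⟩⟩
    simpa [emap_apply, hiv] using h2
  have hrange_e : LinearMap.range (emap (F := F) u k k')
      = LinearMap.ker (pimap u k k' hlt) := by
    apply le_antisymm
    · rintro _ ⟨x₀, rfl⟩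
      rw [LinearMap.mem_ker]
      funext j
      rw [pimap_apply, emap_apply]
      simp
    · intro x hx
      rw [LinearMap.mem_ker] at hx
      refine ⟨fun p => x ⟨p.1, ⟨(p.2 : ℕ), lt_trans p.2.2 (hlt p.1)⟩⟩, ?_⟩
      funext p
      obtain ⟨j, iv, hiv⟩ := p
      rw [emap_apply]
      by_cases h : iv < k j.1
      · rw [dif_pos h]
      · rw [dif_neg h]
        have hik : iv = k j.1 := by have := hkk' j; omega
        have h2 : x ⟨j, ⟨k j.1, hlt j⟩⟩ = 0 := by
          have h3 := congrFun hx j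
          simpa [pimap_apply] using h3
        have h4 : x ⟨j, ⟨iv, hiv⟩⟩ = 0 := by
          rw [show (⟨iv, hiv⟩ : Fin (k' j.1)) = ⟨k j.1, hlt j⟩ from Fin.ext hik]
          exact h2
        exact h4.symm
  have hker : LinearMap.ker (Mmat C n u k').vecMulLinear ⊓ LinearMap.ker (pimap u k k' hlt)
      = (LinearMap.ker (Mmat C n u k).vecMulLinear).map (emap u k k') := by
    apply le_antisymm
    · rintro x hx
      obtain ⟨hx1, hx2⟩ := Submodule.mem_inf.mp hx
      rw [← hrange_e] at hx2
      obtain ⟨x₀, rfl⟩ := hx2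
      refine Submodule.mem_map_of_mem ?_
      rw [LinearMap.mem_ker] at hx1 ⊢
      rw [← hTe x₀]
      exact hx1
    · rintro _ ⟨x₀, hx₀, rfl⟩
      rw [Submodule.mem_inf]
      constructor
      · rw [LinearMap.mem_ker, hTe x₀]
        exact hx₀
      · exact hrange_e ▸ LinearMap.mem_range_self (emap u k k') x₀
  have hone := LinearMap.finrank_range_add_finrank_ker (Mmat C n u k').vecMulLinear
  have hzero := LinearMap.finrank_range_add_finrank_ker (Mmat C n u k).vecMulLinear
  have hrank1 : Module.finrank F (LinearMap.range (Mmat C n u k').vecMulLinear)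
      = (Cuk C n u k').rank := by
    rw [finrank_range_vecMulLinear, rank_Mmat]
  have hrank0 : Module.finrank F (LinearMap.range (Mmat C n u k).vecMulLinear)
      = (Cuk C n u k).rank := by
    rw [finrank_range_vecMulLinear, rank_Mmat]
  have hdim1 : Module.finrank F ((((j : {j : Fin s // j ∈ u}) × Fin (k' j.1))) → F)
      = ∑ j : {j : Fin s // j ∈ u}, k' j.1 := by
    rw [Module.finrank_pi, Fintype.card_sigma]
    simp
  have hdim0 : Module.finrank F ((((j : {j : Fin s // j ∈ u}) × Fin (k j.1))) → F)
      = ∑ j : {j : Fin s // j ∈ u}, k j.1 := by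
    rw [Module.finrank_pi, Fintype.card_sigma]
    simp
  have hsum : ∑ j : {j : Fin s // j ∈ u}, k' j.1
      = (∑ j : {j : Fin s // j ∈ u}, k j.1) + u.card := by
    calc ∑ j : {j : Fin s // j ∈ u}, k' j.1
        = ∑ j : {j : Fin s // j ∈ u}, (k j.1 + 1) :=
          Finset.sum_congr rfl (fun j _ => hkk' j)
      _ = (∑ j : {j : Fin s // j ∈ u}, k j.1) + u.card := by
          rw [Finset.sum_add_distrib]
          simp [Fintype.card_coe]
  have hres := LinearMap.finrank_range_add_finrank_ker
    ((pimap u k k' hlt).comp (LinearMap.ker (Mmat C n u k').vecMulLinear).subtype)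
  rw [LinearMap.range_comp, Submodule.range_subtype, LinearMap.ker_comp] at hres
  have hcom : Module.finrank F
      (Submodule.comap (LinearMap.ker (Mmat C n u k').vecMulLinear).subtype
        (LinearMap.ker (pimap u k k' hlt)))
      = Module.finrank F
        ((LinearMap.ker (Mmat C n u k).vecMulLinear).map (emap u k k')) := by
    have h1 := Submodule.finrank_map_subtype_eq
      (LinearMap.ker (Mmat C n u k').vecMulLinear)
      (Submodule.comap (LinearMap.ker (Mmat C n u k').vecMulLinear).subtype
        (LinearMap.ker (pimap u k k' hlt)))
    rw [Submodule.map_comap_subtype, hker] at h1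
    exact h1.symm
  have hmape : Module.finrank F ((LinearMap.ker (Mmat C n u k).vecMulLinear).map (emap u k k'))
      = Module.finrank F (LinearMap.ker (Mmat C n u k).vecMulLinear) :=
    (LinearEquiv.finrank_eq (Submodule.equivMapOfInjective (emap u k k') he_inj
      (LinearMap.ker (Mmat C n u k).vecMulLinear))).symm
  rw [hdim1] at hone
  rw [hdim0] at hzero
  rw [hcom, hmape] at hres
  omega

end Aux8

/-- the image of the restriction of `proj_{u,k+1_u}` (extracting the
`(k_j+1)`-st digit for `j ∈ u`) to `V(u,k+1_u) ∩ P^⊥` is a subspace of `F^{|u|}` of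
dimension `|u| - rank(C_{u,k+1_u}) + rank(C_{u,k})`. -/
theorem stmt8 {F : Type} [Field F] [Fintype F] {s m : ℕ}
    (φ : Fin (Fintype.card F) ≃ F) (hφ : φ ⟨0, Fintype.card_pos⟩ = 0)
    (C : Fin s → ℕ → Fin m → F) (n : ℕ) (hn : m ≤ n)
    (u : Finset (Fin s)) (k : Fin s → ℕ) :
    ∃ W : Submodule F ({j : Fin s // j ∈ u} → F),
      (W : Set ({j : Fin s // j ∈ u} → F)) =
        {y | ∃ ℓ : Fin s → ℕ, ℓ ∈ Vset (Fintype.card F) u (plusOne k u) ∧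
          inDual φ C n ℓ ∧
          ∀ j : {j : Fin s // j ∈ u},
            y j = toF φ (ndigit (Fintype.card F) (ℓ (j : Fin s)) (k (j : Fin s)))} ∧
      Module.finrank F W =
        u.card + (Cuk C n u k).rank - (Cuk C n u (plusOne k u)).rank := by
  have hb1 : (1 : ℕ) < Fintype.card F := Fintype.one_lt_card
  have hkk' : ∀ j : {j : Fin s // j ∈ u}, plusOne k u j.1 = k j.1 + 1 := fun j => if_pos j.2
  have hlt : ∀ j : {j : Fin s // j ∈ u}, k j.1 < plusOne k u j.1 := fun j => by
    rw [hkk' j]; omega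
  refine ⟨(LinearMap.ker (Mmat C n u (plusOne k u)).vecMulLinear).map
    (pimap u k (plusOne k u) hlt), ?_, ?_⟩
  · ext y
    simp only [SetLike.mem_coe, Submodule.mem_map, LinearMap.mem_ker, Set.mem_setOf_eq]
    constructor
    · rintro ⟨x, hxT, rfl⟩
      have hd : ∀ (j : Fin s) (i : ℕ), (if hj : j ∈ u then (if hi : i < plusOne k u j then fromF φ (x ⟨⟨j, hj⟩, ⟨i, hi⟩⟩) else 0) else 0) < Fintype.card F := by
        intro j i
        split_ifs
        · exact fromF_lt φ _
        · exact Fintype.card_pos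
        · exact Fintype.card_pos
      have hdig : ∀ (j : Fin s) (i : ℕ), i < plusOne k u j →
          ndigit (Fintype.card F)
            (∑ i' ∈ Finset.range (plusOne k u j), (if hj : j ∈ u then (if hi : i' < plusOne k u j then fromF φ (x ⟨⟨j, hj⟩, ⟨i', hi⟩⟩) else 0) else 0) * Fintype.card F ^ i') i
          = (if hj : j ∈ u then (if hi : i < plusOne k u j then fromF φ (x ⟨⟨j, hj⟩, ⟨i, hi⟩⟩) else 0) else 0) :=
        fun j i hi => ndigit_sum hb1 _ (hd j) _ i hi
      have hx : ∀ p : (j : {j : Fin s // j ∈ u}) × Fin (plusOne k u j.1),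
          x p = toF φ (ndigit (Fintype.card F)
            (∑ i' ∈ Finset.range (plusOne k u p.1.1), (if hj : p.1.1 ∈ u then
              (if hi : i' < plusOne k u p.1.1 then fromF φ (x ⟨⟨p.1.1, hj⟩, ⟨i', hi⟩⟩) else 0)
              else 0) * Fintype.card F ^ i') (p.2 : ℕ)) := by
        rintro ⟨⟨j, hj⟩, i⟩
        obtain ⟨iv, hiv⟩ := i
        show x ⟨⟨j, hj⟩, ⟨iv, hiv⟩⟩ = toF φ (ndigit (Fintype.card F)
          (∑ i' ∈ Finset.range (plusOne k u j), (if hj : j ∈ u then (if hi : i' < plusOne k u j then fromF φ (x ⟨⟨j, hj⟩, ⟨i', hi⟩⟩) else 0) else 0) * Fintype.card F ^ i') iv)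
        rw [hdig j iv hiv, dif_pos hj, dif_pos hiv, toF_fromF]
      refine ⟨(fun j => ∑ i' ∈ Finset.range (plusOne k u j), (if hj : j ∈ u then (if hi : i' < plusOne k u j then fromF φ (x ⟨⟨j, hj⟩, ⟨i', hi⟩⟩) else 0) else 0) * Fintype.card F ^ i'), ?_, ?_, ?_⟩
      · rw [Vset, Fintype.mem_piFinset]
        intro j
        rw [Finset.mem_range]
        by_cases hj : j ∈ u
        · rw [if_pos hj]
          exact sum_digits_lt Fintype.card_pos _ (hd j) _
        · rw [if_neg hj]
          exact lt_of_eq_of_lt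
            (Finset.sum_eq_zero fun i _ => by rw [dif_neg hj, zero_mul]) Nat.one_pos
      · refine (inDual_iff_vecMul φ hφ C n u (plusOne k u) (fun j => ∑ i' ∈ Finset.range (plusOne k u j), (if hj : j ∈ u then (if hi : i' < plusOne k u j then fromF φ (x ⟨⟨j, hj⟩, ⟨i', hi⟩⟩) else 0) else 0) * Fintype.card F ^ i')
          (fun j hj => Finset.sum_eq_zero fun i _ => by rw [dif_neg hj, zero_mul])
          (fun j hj => sum_digits_lt Fintype.card_pos _ (hd j) _) x ?_).mpr hxT
        exact fun p => hx p
      · intro j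
        rw [pimap_apply, hx ⟨j, ⟨k j.1, hlt j⟩⟩]
    · rintro ⟨ℓ, hV, hdual, hy⟩
      rw [Vset, Fintype.mem_piFinset] at hV
      have hV0 : ∀ j ∉ u, ℓ j = 0 := fun j hj => by
        have h1 := hV j
        rw [if_neg hj, Finset.mem_range] at h1
        omega
      have hVlt : ∀ j ∈ u, ℓ j < Fintype.card F ^ plusOne k u j := fun j hj => by
        have h1 := hV j
        rwa [if_pos hj, Finset.mem_range] at h1
      refine ⟨fun p => toF φ (ndigit (Fintype.card F) (ℓ p.1.1) (p.2 : ℕ)), ?_, ?_⟩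
      · exact (inDual_iff_vecMul φ hφ C n u (plusOne k u) ℓ hV0 hVlt _ (fun p => rfl)).mp hdual
      · funext j
        rw [pimap_apply, hy j]
  · have hkey := finrank_key C n u k (plusOne k u) hlt hkk'
    omega
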